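/- Let P(λ) = Σ_{i=0}^k P_i λ^i with P_i ∈ ℝ^{m×n} be a matrix polynomial of degree k = ε + η + 1 (ε, η ≥ 0). A matrix pencil L(λ) of size ((η+1)m+εn) × ((ε+1)n+ηm) belongs to G_{η+1}(P) if and only if there exist α ∈ ℝ and matrices B₁ ∈ ℝ^{(η+1)m × εn}, B₂ ∈ ℝ^{ηm × (ε+1)n}, C₁ ∈ ℝ^{εn × εn}, C₂ ∈ ℝ^{ηm × ηm} such that L(λ) equals the 2×2 block matrix with (1,1)-block α·Σ_{η,P}(λ) + B₁·(L_ε(λ) ⊗ I_n) + (L_η(λ)^T ⊗ I_m)·B₂, (1,2)-block (L_η(λ)^T ⊗ I_m)·C₂, (2,1)-block C₁·(L_ε(λ) ⊗ I_n) and (2,2)-block 0_{εn × ηm}. -/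

import Mathlib

open Matrix Polynomial
open scoped Kronecker

noncomputable section

/-- `Λ_j(λ)` as a `(j+1) × 1` matrix of real polynomials, with `i`-th entry `λ^{j-i}`. -/
def Lam (j : ℕ) : Matrix (Fin (j + 1)) (Fin 1) (Polynomial ℝ) :=
  Matrix.of fun i _ => X ^ (j - (i : ℕ))

/-- `L_κ(λ)`, the `κ × (κ+1)` pencil with `-1` on the diagonal and `λ` on the superdiagonal. -/
def Lk (κ : ℕ) : Matrix (Fin κ) (Fin (κ + 1)) (Polynomial ℝ) :=
  Matrix.of fun i j => if (j : ℕ) = (i : ℕ) then -1 else if (j : ℕ) = (i : ℕ) + 1 then X else 0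

/-- The matrix pencil `λ·A + B` as a matrix of real polynomials. -/
def pencilM {ρ γ : Type*} (A B : Matrix ρ γ ℝ) : Matrix ρ γ (Polynomial ℝ) :=
  Matrix.of fun i j => X * C (A i j) + C (B i j)

/-- The matrix polynomial `Σ_{i=0}^k Pc i · λ^i` as a matrix of real polynomials. -/
def polyOf (m n k : ℕ) (Pc : ℕ → Matrix (Fin m) (Fin n) ℝ) :
    Matrix (Fin m) (Fin n) (Polynomial ℝ) :=
  Matrix.of fun i j => ∑ t ∈ Finset.range (k + 1), X ^ t * C (Pc t i j)

/-- The block Kronecker ansatz equation for a rectangular `m × n` matrix polynomial `P` of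
degree `k = ε + η + 1` with ansatz scalar `α`:
`((Λ_η(λ)ᵀ ⊗ I_m) ⊕ I_{εn}) · L(λ) · ((Λ_ε(λ) ⊗ I_n) ⊕ I_{ηm}) = (α·P(λ)) ⊕ 0`. -/
def GRect (m n ε η : ℕ) (Pc : ℕ → Matrix (Fin m) (Fin n) ℝ)
    (Lx Ly : Matrix ((Fin (η + 1) × Fin m) ⊕ (Fin ε × Fin n))
      ((Fin (ε + 1) × Fin n) ⊕ (Fin η × Fin m)) ℝ) (α : ℝ) : Prop :=
  Matrix.fromBlocks ((Lam η)ᵀ ⊗ₖ (1 : Matrix (Fin m) (Fin m) (Polynomial ℝ)))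
      (0 : Matrix (Fin 1 × Fin m) (Fin ε × Fin n) (Polynomial ℝ))
      (0 : Matrix (Fin ε × Fin n) (Fin (η + 1) × Fin m) (Polynomial ℝ))
      (1 : Matrix (Fin ε × Fin n) (Fin ε × Fin n) (Polynomial ℝ))
    * pencilM Lx Ly *
    Matrix.fromBlocks (Lam ε ⊗ₖ (1 : Matrix (Fin n) (Fin n) (Polynomial ℝ)))
      (0 : Matrix (Fin (ε + 1) × Fin n) (Fin η × Fin m) (Polynomial ℝ))
      (0 : Matrix (Fin η × Fin m) (Fin 1 × Fin n) (Polynomial ℝ))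
      (1 : Matrix (Fin η × Fin m) (Fin η × Fin m) (Polynomial ℝ))
    = Matrix.fromBlocks
        (Matrix.of fun p q => C α * polyOf m n (ε + η + 1) Pc p.2 q.2)
        (0 : Matrix (Fin 1 × Fin m) (Fin η × Fin m) (Polynomial ℝ))
        (0 : Matrix (Fin ε × Fin n) (Fin 1 × Fin n) (Polynomial ℝ))
        (0 : Matrix (Fin ε × Fin n) (Fin η × Fin m) (Polynomial ℝ))

/-- The pencil `Σ_{η,P}(λ)`: first block row `[λP_k + P_{k-1}, P_{k-2}, …, P_η]`, last block
column `(P_{η-1}, …, P_0)ᵀ` in block rows `2, …, η+1`, and zero elsewhere (`k = ε + η + 1`). -/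
def SigmaP (m n ε η : ℕ) (Pc : ℕ → Matrix (Fin m) (Fin n) ℝ) :
    Matrix (Fin (η + 1) × Fin m) (Fin (ε + 1) × Fin n) (Polynomial ℝ) :=
  Matrix.of fun p q =>
    if (p.1 : ℕ) = 0 ∧ (q.1 : ℕ) = 0 then
      X * C (Pc (ε + η + 1) p.2 q.2) + C (Pc (ε + η) p.2 q.2)
    else if (p.1 : ℕ) = 0 then C (Pc (ε + η - (q.1 : ℕ)) p.2 q.2)
    else if (q.1 : ℕ) = ε then C (Pc (η - (p.1 : ℕ)) p.2 q.2)
    else 0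

namespace BKA

/-- second ansatz matrix entries -/
def b2 (Z1 Z0 : ℕ → ℕ → ℝ) (p q : ℕ) : ℝ :=
  -(∑ i ∈ Finset.range (p+1), (Z0 i (q+p-i) + Z1 i (q+p-i+1)))

/-- first ansatz matrix entries -/
def b1 (Z1 Z0 : ℕ → ℕ → ℝ) (p r : ℕ) : ℝ :=
  (∑ i ∈ Finset.range (p+1), Z1 i (r+1+p-i))
    + ∑ i ∈ Finset.range p, Z0 i (r+p-i)

variable (η ε : ℕ) (Z1 Z0 : ℕ → ℕ → ℝ)

lemma b2_eq (p q : ℕ) : b2 Z1 Z0 p q = -(Z0 p q) - b1 Z1 Z0 p q := by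
  unfold b2 b1
  rw [Finset.sum_add_distrib, Finset.sum_range_succ (fun i => Z0 i (q+p-i)) p]
  have h1 : ∀ i ∈ Finset.range p, Z0 i (q+p-i) = Z0 i (q+1+(p-1)-i) := by
    intro i hi; simp only [Finset.mem_range] at hi; congr 1; omega
  have h2 : ∀ i ∈ Finset.range (p+1), Z1 i (q+p-i+1) = Z1 i (q+1+p-i) := by
    intro i hi; simp only [Finset.mem_range] at hi; congr 1; omega
  rw [Finset.sum_congr rfl h1, Finset.sum_congr rfl h2]
  have h3 : q + p - p = q := by omega
  rw [h3]
  ring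

lemma b1_zero (r : ℕ) : b1 Z1 Z0 0 r = Z1 0 (r+1) := by
  simp [b1]

lemma b1_succ (p r : ℕ) :
    b1 Z1 Z0 (p+1) r = Z1 (p+1) (r+1) - b2 Z1 Z0 p (r+1) := by
  unfold b1 b2
  rw [Finset.sum_range_succ (fun i => Z1 i (r+1+(p+1)-i)) (p+1)]
  have h1 : ∀ i ∈ Finset.range (p+1), Z1 i (r+1+(p+1)-i) = Z1 i (r+1+p-i+1) := by
    intro i hi; simp only [Finset.mem_range] at hi; congr 1; omega
  have h2 : ∀ i ∈ Finset.range (p+1), Z0 i (r+(p+1)-i) = Z0 i (r+1+p-i) := by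
    intro i hi; simp only [Finset.mem_range] at hi; congr 1; omega
  rw [Finset.sum_congr rfl h1, Finset.sum_congr rfl h2]
  have h3 : r+1+(p+1)-(p+1) = r+1 := by omega
  rw [h3, Finset.sum_add_distrib]
  ring

variable (hZ1 : ∀ p q, η < p ∨ ε < q → Z1 p q = 0)
variable (hZ0 : ∀ p q, η < p ∨ ε < q → Z0 p q = 0)
variable (hstar : ∀ u : ℕ, ∑ p ∈ Finset.range (η+1), ∑ q ∈ Finset.range (ε+1),
    ((if u = (η-p)+(ε-q)+1 then Z1 p q else 0)
      + (if u = (η-p)+(ε-q) then Z0 p q else 0)) = 0)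

lemma inner_eval (f : ℕ → ℝ) (hf : ∀ q, ε < q → f q = 0) (c d u : ℕ) :
    ∑ q ∈ Finset.range (ε+1), (if u = c + (ε - q) + d then f q else 0)
      = if u ≤ c + ε + d then f (c + ε + d - u) else 0 := by
  by_cases h1 : u ≤ c + ε + d
  · rw [if_pos h1]
    by_cases h2 : c + d ≤ u
    · rw [Finset.sum_eq_single (c + ε + d - u)]
      · exact if_pos (by omega)
      · intro q hq hne
        simp only [Finset.mem_range] at hq
        exact if_neg (by omega)
      · intro h
        exact absurd (Finset.mem_range.2 (by omega)) h
    · rw [hf _ (by omega), Finset.sum_eq_zero]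
      intro q hq
      simp only [Finset.mem_range] at hq
      exact if_neg (by omega)
  · rw [if_neg h1, Finset.sum_eq_zero]
    intro q hq
    simp only [Finset.mem_range] at hq
    exact if_neg (by omega)

include hZ1 hZ0 hstar in
lemma star_eval (u : ℕ) :
    (∑ p ∈ Finset.range (η+1), if u ≤ (η-p) + ε + 1 then Z1 p ((η-p) + ε + 1 - u) else 0)
    + (∑ p ∈ Finset.range (η+1), if u ≤ (η-p) + ε then Z0 p ((η-p) + ε - u) else 0) = 0 := by
  have key : (∑ p ∈ Finset.range (η+1), if u ≤ (η-p) + ε + 1 then Z1 p ((η-p) + ε + 1 - u) else 0)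
      + (∑ p ∈ Finset.range (η+1), if u ≤ (η-p) + ε then Z0 p ((η-p) + ε - u) else 0)
      = ∑ p ∈ Finset.range (η+1), ∑ q ∈ Finset.range (ε+1),
        ((if u = (η-p)+(ε-q)+1 then Z1 p q else 0)
          + (if u = (η-p)+(ε-q) then Z0 p q else 0)) := by
    rw [← Finset.sum_add_distrib]
    apply Finset.sum_congr rfl
    intro p hp
    rw [Finset.sum_add_distrib]
    congr 1
    · exact (inner_eval ε (Z1 p) (fun q hq => hZ1 p q (Or.inr hq)) (η-p) 1 u).symm
    · have e0 : ∀ q ∈ Finset.range (ε+1),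
          (if u = (η-p)+(ε-q) then Z0 p q else 0) = (if u = (η-p)+(ε-q)+0 then Z0 p q else 0) := by
        intro q hq; norm_num
      rw [Finset.sum_congr rfl e0, inner_eval ε (Z0 p) (fun q hq => hZ0 p q (Or.inr hq)) (η-p) 0 u]
      norm_num
  rw [key]
  exact hstar u

lemma sum_ite_le (f : ℕ → ℝ) (N c : ℕ) (hfc : ∀ p, N < p → f p = 0) :
    ∑ p ∈ Finset.range (N+1), (if p ≤ c then f p else 0) = ∑ p ∈ Finset.range (c+1), f p := by
  rw [← Finset.sum_filter]
  have hset : Finset.filter (fun p => p ≤ c) (Finset.range (N+1)) = Finset.range (min N c + 1) := by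
    ext x
    simp only [Finset.mem_filter, Finset.mem_range]
    omega
  rw [hset]
  apply Finset.sum_subset
  · intro x hx
    simp only [Finset.mem_range] at *
    omega
  · intro x hx hnx
    simp only [Finset.mem_range] at *
    exact hfc x (by omega)

include hZ1 hZ0 hstar in
lemma K1 (q₀ : ℕ) (hq : q₀ ≤ ε) : b2 Z1 Z0 η q₀ = 0 := by
  have hs := star_eval η ε Z1 Z0 hZ1 hZ0 hstar (ε - q₀)
  have e1 : ∀ p ∈ Finset.range (η+1),
      (if ε - q₀ ≤ (η-p) + ε + 1 then Z1 p ((η-p) + ε + 1 - (ε - q₀)) else 0)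
        = Z1 p (q₀+η-p+1) := by
    intro p hp; simp only [Finset.mem_range] at hp
    rw [if_pos (by omega)]; congr 1; omega
  have e0 : ∀ p ∈ Finset.range (η+1),
      (if ε - q₀ ≤ (η-p) + ε then Z0 p ((η-p) + ε - (ε - q₀)) else 0)
        = Z0 p (q₀+η-p) := by
    intro p hp; simp only [Finset.mem_range] at hp
    rw [if_pos (by omega)]; congr 1; omega
  rw [Finset.sum_congr rfl e1, Finset.sum_congr rfl e0] at hs
  unfold b2
  rw [Finset.sum_add_distrib, neg_eq_zero]
  linarith [hs]

include hZ1 hZ0 hstar in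
lemma K2 (p₀ : ℕ) (hp : p₀ ≤ η) : b2 Z1 Z0 p₀ 0 = Z1 (p₀+1) 0 := by
  have hs := star_eval η ε Z1 Z0 hZ1 hZ0 hstar (η + ε - p₀)
  have e1 : ∀ p ∈ Finset.range (η+1),
      (if η + ε - p₀ ≤ (η-p) + ε + 1 then Z1 p ((η-p) + ε + 1 - (η + ε - p₀)) else 0)
        = (if p ≤ p₀ + 1 then Z1 p (p₀+1-p) else 0) := by
    intro p hp'; simp only [Finset.mem_range] at hp'
    by_cases h : p ≤ p₀ + 1
    · rw [if_pos (by omega), if_pos h]; congr 1; omega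
    · rw [if_neg (by omega), if_neg h]
  have e0 : ∀ p ∈ Finset.range (η+1),
      (if η + ε - p₀ ≤ (η-p) + ε then Z0 p ((η-p) + ε - (η + ε - p₀)) else 0)
        = (if p ≤ p₀ then Z0 p (p₀-p) else 0) := by
    intro p hp'; simp only [Finset.mem_range] at hp'
    by_cases h : p ≤ p₀
    · rw [if_pos (by omega), if_pos h]; congr 1; omega
    · rw [if_neg (by omega), if_neg h]
  rw [Finset.sum_congr rfl e1, Finset.sum_congr rfl e0] at hs
  rw [sum_ite_le (fun p => Z1 p (p₀+1-p)) η (p₀+1)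
      (fun p hp' => hZ1 _ _ (Or.inl hp')),
    sum_ite_le (fun p => Z0 p (p₀-p)) η p₀
      (fun p hp' => hZ0 _ _ (Or.inl hp')),
    Finset.sum_range_succ (fun p => Z1 p (p₀+1-p)) (p₀+1)] at hs
  have hz : p₀ + 1 - (p₀ + 1) = 0 := by omega
  rw [hz] at hs
  unfold b2
  have c1 : ∀ i ∈ Finset.range (p₀+1), Z0 i (0+p₀-i) + Z1 i (0+p₀-i+1)
      = Z0 i (p₀-i) + Z1 i (p₀+1-i) := by
    intro i hi; simp only [Finset.mem_range] at hi
    congr 2 <;> omega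
  rw [Finset.sum_congr rfl c1, Finset.sum_add_distrib]
  linarith [hs]

include hZ1 hZ0 hstar in
lemma K3 : Z1 0 0 = 0 := by
  have hs := star_eval η ε Z1 Z0 hZ1 hZ0 hstar (η + ε + 1)
  have e1 : ∀ p ∈ Finset.range (η+1),
      (if η + ε + 1 ≤ (η-p) + ε + 1 then Z1 p ((η-p) + ε + 1 - (η + ε + 1)) else 0)
        = (if p ≤ 0 then Z1 p 0 else 0) := by
    intro p hp'; simp only [Finset.mem_range] at hp'
    by_cases h : p ≤ 0
    · rw [if_pos (by omega), if_pos h]; congr 1; omega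
    · rw [if_neg (by omega), if_neg h]
  have e0 : ∀ p ∈ Finset.range (η+1),
      (if η + ε + 1 ≤ (η-p) + ε then Z0 p ((η-p) + ε - (η + ε + 1)) else 0) = 0 := by
    intro p hp'; simp only [Finset.mem_range] at hp'
    rw [if_neg (by omega)]
  rw [Finset.sum_congr rfl e1, Finset.sum_congr rfl e0,
    sum_ite_le (fun p => Z1 p 0) η 0 (fun p hp' => hZ1 _ _ (Or.inl hp'))] at hs
  simpa using hs

include hZ1 hZ0 in
lemma b1_top (p : ℕ) : b1 Z1 Z0 p ε = 0 := by
  unfold b1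
  have s1 : (∑ i ∈ Finset.range (p+1), Z1 i (ε+1+p-i)) = 0 := by
    apply Finset.sum_eq_zero
    intro i hi
    simp only [Finset.mem_range] at hi
    exact hZ1 _ _ (Or.inr (by omega))
  have s2 : (∑ i ∈ Finset.range p, Z0 i (ε+p-i)) = 0 := by
    apply Finset.sum_eq_zero
    intro i hi
    simp only [Finset.mem_range] at hi
    exact hZ0 _ _ (Or.inr (by omega))
  rw [s1, s2, add_zero]

include hZ1 hZ0 hstar in
lemma Ic (p q : ℕ) (hp : p ≤ η) (hq : q ≤ ε) :
    Z1 p q = (if 1 ≤ q then b1 Z1 Z0 p (q-1) else 0)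
      + (if 1 ≤ p then b2 Z1 Z0 (p-1) q else 0) := by
  match p, q with
  | 0, 0 => simpa using K3 η ε Z1 Z0 hZ1 hZ0 hstar
  | 0, (s+1) => simp [b1_zero]
  | (t+1), 0 =>
    simp only [Nat.le_refl, if_neg (by omega : ¬ (1:ℕ) ≤ 0), if_pos (by omega : 1 ≤ t+1),
      Nat.add_sub_cancel, zero_add]
    exact (K2 η ε Z1 Z0 hZ1 hZ0 hstar t (by omega)).symm
  | (t+1), (s+1) =>
    rw [if_pos (by omega), if_pos (by omega)]
    have h1 : (s+1) - 1 = s := by omega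
    have h2 : (t+1) - 1 = t := by omega
    rw [h1, h2, b1_succ]
    ring

include hZ1 hZ0 hstar in
lemma IIc (p q : ℕ) (hp : p ≤ η) (hq : q ≤ ε) :
    Z0 p q = -(if q < ε then b1 Z1 Z0 p q else 0)
      - (if p < η then b2 Z1 Z0 p q else 0) := by
  have heq := b2_eq Z1 Z0 p q
  have hbt : b1 Z1 Z0 p ε = 0 := b1_top η ε Z1 Z0 hZ1 hZ0 p
  by_cases hq' : q < ε <;> by_cases hp' : p < η
  · rw [if_pos hq', if_pos hp']; linarith
  · have k1 : b2 Z1 Z0 p q = 0 := by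
      have hpη : p = η := by omega
      rw [hpη]; exact K1 η ε Z1 Z0 hZ1 hZ0 hstar q hq
    rw [if_pos hq', if_neg hp']; linarith
  · have hb : b1 Z1 Z0 p q = 0 := by
      have hqε : q = ε := by omega
      rw [hqε]; exact hbt
    rw [if_neg hq', if_pos hp']
    linarith
  · have k1 : b2 Z1 Z0 p q = 0 := by
      have hpη : p = η := by omega
      rw [hpη]; exact K1 η ε Z1 Z0 hZ1 hZ0 hstar q hq
    have hb : b1 Z1 Z0 p q = 0 := by
      have hqε : q = ε := by omega
      rw [hqε]; exact hbt
    rw [if_neg hq', if_neg hp']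
    linarith

include hZ1 hZ0 hstar in
lemma recon (p q : ℕ) (hp : p ≤ η) (hq : q ≤ ε) :
    X * C (Z1 p q) + C (Z0 p q)
      = ((if q < ε then -C (b1 Z1 Z0 p q) else 0)
          + (if 1 ≤ q then X * C (b1 Z1 Z0 p (q-1)) else 0))
      + ((if p < η then -C (b2 Z1 Z0 p q) else 0)
          + (if 1 ≤ p then X * C (b2 Z1 Z0 (p-1) q) else 0)) := by
  rw [Ic η ε Z1 Z0 hZ1 hZ0 hstar p q hp hq, IIc η ε Z1 Z0 hZ1 hZ0 hstar p q hp hq]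
  split_ifs <;> simp only [map_add, map_neg, map_zero, map_sub, C_0, add_zero, zero_add,
    neg_zero, sub_zero, zero_sub, neg_neg] <;> ring

lemma star_of_poly
    (h : ∑ p ∈ Finset.range (η+1), ∑ q ∈ Finset.range (ε+1),
        (X : Polynomial ℝ) ^ ((η-p)+(ε-q)) * (X * C (Z1 p q) + C (Z0 p q)) = 0) :
    ∀ u : ℕ, ∑ p ∈ Finset.range (η+1), ∑ q ∈ Finset.range (ε+1),
      ((if u = (η-p)+(ε-q)+1 then Z1 p q else 0)
        + (if u = (η-p)+(ε-q) then Z0 p q else 0)) = 0 := by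
  intro u
  have h2 : ∑ p ∈ Finset.range (η+1), ∑ q ∈ Finset.range (ε+1),
      (C (Z1 p q) * X ^ ((η-p)+(ε-q)+1) + C (Z0 p q) * X ^ ((η-p)+(ε-q))) = 0 := by
    have e : ∑ p ∈ Finset.range (η+1), ∑ q ∈ Finset.range (ε+1),
        (C (Z1 p q) * X ^ ((η-p)+(ε-q)+1) + C (Z0 p q) * X ^ ((η-p)+(ε-q)))
        = ∑ p ∈ Finset.range (η+1), ∑ q ∈ Finset.range (ε+1),
          (X : Polynomial ℝ) ^ ((η-p)+(ε-q)) * (X * C (Z1 p q) + C (Z0 p q)) := by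
      apply Finset.sum_congr rfl; intro p _
      apply Finset.sum_congr rfl; intro q _
      ring
    rw [e]; exact h
  have h3 := congrArg (fun f : Polynomial ℝ => f.coeff u) h2
  simpa only [Polynomial.finset_sum_coeff, Polynomial.coeff_add, Polynomial.coeff_C_mul,
    Polynomial.coeff_X_pow, mul_ite, mul_one, mul_zero, Polynomial.coeff_zero] using h3

end BKA

namespace BKA

section MatrixLemmas

open Matrix
open scoped Kronecker

variable {ρ γ : Type*}

lemma mul_Lk_apply (ε n : ℕ) (W : Matrix ρ (Fin ε × Fin n) (Polynomial ℝ))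
    (w : ρ → Fin n → ℕ → Polynomial ℝ) (hW : ∀ x r b, W x (r, b) = w x b (r : ℕ))
    (x : ρ) (q : Fin (ε+1)) (b : Fin n) :
    (W * (Lk ε ⊗ₖ (1 : Matrix (Fin n) (Fin n) (Polynomial ℝ)))) x (q, b)
      = (if (q : ℕ) < ε then -(w x b (q : ℕ)) else 0)
        + (if 1 ≤ (q : ℕ) then X * w x b ((q : ℕ) - 1) else 0) := by
  rw [Matrix.mul_apply, Fintype.sum_prod_type]
  have step : ∀ r : Fin ε, ∑ b' : Fin n, W x (r, b') * (Lk ε ⊗ₖ (1 : Matrix (Fin n) (Fin n) (Polynomial ℝ))) (r, b') (q, b)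
      = w x b (r : ℕ) * Lk ε r q := by
    intro r
    rw [Finset.sum_eq_single b]
    · rw [hW, Matrix.kroneckerMap_apply, Matrix.one_apply_eq, mul_one]
    · intro b' _ hne
      rw [Matrix.kroneckerMap_apply, Matrix.one_apply_ne hne, mul_zero, mul_zero]
    · intro hb; exact absurd (Finset.mem_univ b) hb
  rw [Finset.sum_congr rfl (fun r _ => step r)]
  have split : ∀ r : Fin ε, w x b (r : ℕ) * Lk ε r q
      = (if (q : ℕ) = (r : ℕ) then -(w x b (r : ℕ)) else 0)
        + (if (q : ℕ) = (r : ℕ) + 1 then X * w x b (r : ℕ) else 0) := by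
    intro r
    by_cases h1 : (q : ℕ) = (r : ℕ)
    · rw [if_pos h1, if_neg (by omega), Lk, Matrix.of_apply, if_pos h1, add_zero]
      ring
    · rw [if_neg h1, Lk, Matrix.of_apply, if_neg h1, zero_add]
      by_cases h2 : (q : ℕ) = (r : ℕ) + 1
      · rw [if_pos h2, if_pos h2]; ring
      · rw [if_neg h2, if_neg h2, mul_zero]
  rw [Finset.sum_congr rfl (fun r _ => split r), Finset.sum_add_distrib]
  congr 1
  · by_cases h : (q : ℕ) < ε
    · rw [if_pos h, Finset.sum_eq_single (⟨(q : ℕ), h⟩ : Fin ε)]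
      · rw [if_pos rfl]
      · intro r _ hne
        have hr := r.2
        exact if_neg (fun hc => hne (Fin.ext hc.symm))
      · intro hb; exact absurd (Finset.mem_univ _) hb
    · rw [if_neg h, Finset.sum_eq_zero]
      intro r _
      have hr := r.2
      exact if_neg (by omega)
  · by_cases h : 1 ≤ (q : ℕ)
    · have hq := q.2
      rw [if_pos h, Finset.sum_eq_single (⟨(q : ℕ) - 1, by omega⟩ : Fin ε)]
      · rw [if_pos (by simp; omega)]
      · intro r _ hne
        exact if_neg (fun hc => hne (Fin.ext (by simp; omega)))
      · intro hb; exact absurd (Finset.mem_univ _) hb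
    · rw [if_neg h, Finset.sum_eq_zero]
      intro r _
      exact if_neg (by omega)

lemma Lk_mul_apply (η m : ℕ) {γ : Type*} (W : Matrix (Fin η × Fin m) γ (Polynomial ℝ))
    (w : Fin m → ℕ → γ → Polynomial ℝ) (hW : ∀ s a y, W (s, a) y = w a (s : ℕ) y)
    (p : Fin (η+1)) (a : Fin m) (y : γ) :
    (((Lk η)ᵀ ⊗ₖ (1 : Matrix (Fin m) (Fin m) (Polynomial ℝ))) * W) (p, a) y
      = (if (p : ℕ) < η then -(w a (p : ℕ) y) else 0)
        + (if 1 ≤ (p : ℕ) then X * w a ((p : ℕ) - 1) y else 0) := by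
  rw [Matrix.mul_apply, Fintype.sum_prod_type]
  have step : ∀ s : Fin η, ∑ a' : Fin m,
      ((Lk η)ᵀ ⊗ₖ (1 : Matrix (Fin m) (Fin m) (Polynomial ℝ))) (p, a) (s, a') * W (s, a') y
      = Lk η s p * w a (s : ℕ) y := by
    intro s
    rw [Finset.sum_eq_single a]
    · rw [hW, Matrix.kroneckerMap_apply, Matrix.transpose_apply, Matrix.one_apply_eq, mul_one]
    · intro a' _ hne
      rw [Matrix.kroneckerMap_apply, Matrix.one_apply_ne (Ne.symm hne), mul_zero, zero_mul]
    · intro hb; exact absurd (Finset.mem_univ a) hb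
  rw [Finset.sum_congr rfl (fun s _ => step s)]
  have split : ∀ s : Fin η, Lk η s p * w a (s : ℕ) y
      = (if (p : ℕ) = (s : ℕ) then -(w a (s : ℕ) y) else 0)
        + (if (p : ℕ) = (s : ℕ) + 1 then X * w a (s : ℕ) y else 0) := by
    intro s
    by_cases h1 : (p : ℕ) = (s : ℕ)
    · rw [if_pos h1, if_neg (by omega), Lk, Matrix.of_apply, if_pos h1, add_zero]
      ring
    · rw [if_neg h1, Lk, Matrix.of_apply, if_neg h1, zero_add]
      by_cases h2 : (p : ℕ) = (s : ℕ) + 1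
      · rw [if_pos h2, if_pos h2]
      · rw [if_neg h2, if_neg h2, zero_mul]
  rw [Finset.sum_congr rfl (fun s _ => split s), Finset.sum_add_distrib]
  congr 1
  · by_cases h : (p : ℕ) < η
    · rw [if_pos h, Finset.sum_eq_single (⟨(p : ℕ), h⟩ : Fin η)]
      · rw [if_pos rfl]
      · intro s _ hne
        exact if_neg (fun hc => hne (Fin.ext hc.symm))
      · intro hb; exact absurd (Finset.mem_univ _) hb
    · rw [if_neg h, Finset.sum_eq_zero]
      intro s _
      have hs := s.2
      exact if_neg (by omega)
  · by_cases h : 1 ≤ (p : ℕ)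
    · have hp := p.2
      rw [if_pos h, Finset.sum_eq_single (⟨(p : ℕ) - 1, by omega⟩ : Fin η)]
      · rw [if_pos (by simp; omega)]
      · intro s _ hne
        exact if_neg (fun hc => hne (Fin.ext (by simp; omega)))
      · intro hb; exact absurd (Finset.mem_univ _) hb
    · rw [if_neg h, Finset.sum_eq_zero]
      intro s _
      exact if_neg (by omega)

lemma Lam_mul_apply (η m : ℕ) {γ : Type*} (W : Matrix (Fin (η+1) × Fin m) γ (Polynomial ℝ))
    (i : Fin 1) (a : Fin m) (y : γ) :
    (((Lam η)ᵀ ⊗ₖ (1 : Matrix (Fin m) (Fin m) (Polynomial ℝ))) * W) (i, a) y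
      = ∑ p : Fin (η+1), X ^ (η - (p : ℕ)) * W (p, a) y := by
  rw [Matrix.mul_apply, Fintype.sum_prod_type]
  apply Finset.sum_congr rfl
  intro p _
  rw [Finset.sum_eq_single a]
  · rw [Matrix.kroneckerMap_apply, Matrix.transpose_apply, Matrix.one_apply_eq, mul_one,
      Lam, Matrix.of_apply]
  · intro a' _ hne
    rw [Matrix.kroneckerMap_apply, Matrix.one_apply_ne (Ne.symm hne), mul_zero, zero_mul]
  · intro hb; exact absurd (Finset.mem_univ a) hb

lemma mul_Lam_apply (ε n : ℕ) {ρ : Type*} (W : Matrix ρ (Fin (ε+1) × Fin n) (Polynomial ℝ))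
    (x : ρ) (j : Fin 1) (b : Fin n) :
    (W * (Lam ε ⊗ₖ (1 : Matrix (Fin n) (Fin n) (Polynomial ℝ)))) x (j, b)
      = ∑ q : Fin (ε+1), W x (q, b) * X ^ (ε - (q : ℕ)) := by
  rw [Matrix.mul_apply, Fintype.sum_prod_type]
  apply Finset.sum_congr rfl
  intro q _
  rw [Finset.sum_eq_single b]
  · rw [Matrix.kroneckerMap_apply, Matrix.one_apply_eq, mul_one, Lam, Matrix.of_apply]
  · intro b' _ hne
    rw [Matrix.kroneckerMap_apply, Matrix.one_apply_ne hne, mul_zero, mul_zero]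
  · intro hb; exact absurd (Finset.mem_univ b) hb

lemma Lk_mul_Lam (κ : ℕ) : Lk κ * Lam κ = 0 := by
  ext i j
  rw [Matrix.mul_apply, Matrix.zero_apply]
  have split : ∀ t : Fin (κ+1), Lk κ i t * Lam κ t j
      = (if (t : ℕ) = (i : ℕ) then -X ^ (κ - (i : ℕ)) else 0)
        + (if (t : ℕ) = (i : ℕ) + 1 then X * X ^ (κ - (t : ℕ)) else 0) := by
    intro t
    simp only [Lk, Lam, Matrix.of_apply]
    by_cases h1 : (t : ℕ) = (i : ℕ)
    · rw [if_pos h1, if_pos h1, if_neg (by omega), h1, add_zero]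
      ring
    · rw [if_neg h1, if_neg h1, zero_add]
      by_cases h2 : (t : ℕ) = (i : ℕ) + 1
      · rw [if_pos h2, if_pos h2]
      · rw [if_neg h2, if_neg h2, zero_mul]
  rw [Finset.sum_congr rfl (fun t _ => split t), Finset.sum_add_distrib]
  have hi := i.2
  rw [Finset.sum_eq_single (⟨(i : ℕ), by omega⟩ : Fin (κ+1)) _ (fun hb => absurd (Finset.mem_univ _) hb),
    Finset.sum_eq_single (⟨(i : ℕ) + 1, by omega⟩ : Fin (κ+1)) _ (fun hb => absurd (Finset.mem_univ _) hb)]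
  · rw [if_pos rfl, if_pos rfl]
    have : (X : Polynomial ℝ) * X ^ (κ - ((i : ℕ) + 1)) = X ^ (κ - (i : ℕ)) := by
      rw [← pow_succ']
      congr 1
      omega
    simp only [this]
    ring
  · intro t _ hne
    exact if_neg (fun hc => hne (Fin.ext hc))
  · intro t _ hne
    exact if_neg (fun hc => hne (Fin.ext hc))

lemma KR_mul_LamR (ε n : ℕ) :
    (Lk ε ⊗ₖ (1 : Matrix (Fin n) (Fin n) (Polynomial ℝ)))
      * (Lam ε ⊗ₖ (1 : Matrix (Fin n) (Fin n) (Polynomial ℝ))) = 0 := by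
  rw [← Matrix.mul_kronecker_mul, Lk_mul_Lam, Matrix.one_mul, Matrix.zero_kronecker]

lemma LamL_mul_KL (η m : ℕ) :
    ((Lam η)ᵀ ⊗ₖ (1 : Matrix (Fin m) (Fin m) (Polynomial ℝ)))
      * ((Lk η)ᵀ ⊗ₖ (1 : Matrix (Fin m) (Fin m) (Polynomial ℝ))) = 0 := by
  rw [← Matrix.mul_kronecker_mul, ← Matrix.transpose_mul, Lk_mul_Lam, Matrix.one_mul,
    Matrix.transpose_zero, Matrix.zero_kronecker]

end MatrixLemmas

section Sigma

open Matrix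
open scoped Kronecker

variable (m n ε η : ℕ) (Pc : ℕ → Matrix (Fin m) (Fin n) ℝ) (a : Fin m) (b : Fin n)

/-- λ-coefficient of the (p,q) block entry of `Σ_{η,P}` -/
def sig1 : ℕ → ℕ → ℝ := fun p q => if p = 0 ∧ q = 0 then Pc (ε+η+1) a b else 0

/-- constant coefficient of the (p,q) block entry of `Σ_{η,P}` -/
def sig0 : ℕ → ℕ → ℝ := fun p q =>
  if p = 0 ∧ q = 0 then Pc (ε+η) a b
  else if p = 0 ∧ q ≤ ε then Pc (ε+η-q) a b
  else if q = ε ∧ p ≤ η then Pc (η-p) a b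
  else 0

lemma SigmaP_apply (p : Fin (η+1)) (q : Fin (ε+1)) :
    SigmaP m n ε η Pc (p, a) (q, b)
      = X * C (sig1 m n ε η Pc a b (p : ℕ) (q : ℕ)) + C (sig0 m n ε η Pc a b (p : ℕ) (q : ℕ)) := by
  have hp := p.2
  have hq := q.2
  simp only [SigmaP, Matrix.of_apply, sig1, sig0]
  by_cases h1 : ((p : ℕ) = 0 ∧ (q : ℕ) = 0)
  · rw [if_pos h1, if_pos h1, if_pos h1]
  · rw [if_neg h1, if_neg h1, if_neg h1]
    by_cases h2 : (p : ℕ) = 0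
    · rw [if_pos h2, if_pos ⟨h2, by omega⟩]
      simp
    · rw [if_neg h2, if_neg (show ¬((p : ℕ) = 0 ∧ (q : ℕ) ≤ ε) from fun hh => h2 hh.1)]
      by_cases h3 : (q : ℕ) = ε
      · rw [if_pos h3, if_pos (show (q : ℕ) = ε ∧ (p : ℕ) ≤ η from ⟨h3, by omega⟩)]
        simp
      · rw [if_neg h3, if_neg (show ¬((q : ℕ) = ε ∧ (p : ℕ) ≤ η) from fun hh => h3 hh.1)]
        simp

lemma sig_sum :
    ∑ p ∈ Finset.range (η+1), ∑ q ∈ Finset.range (ε+1),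
        (X : Polynomial ℝ) ^ ((η-p)+(ε-q))
          * (X * C (sig1 m n ε η Pc a b p q) + C (sig0 m n ε η Pc a b p q))
      = ∑ t ∈ Finset.range (ε+η+1+1), X ^ t * C (Pc t a b) := by
  rw [Finset.sum_range_succ']
  -- p = 0 part and p = i+1 part
  have hp0 : ∑ q ∈ Finset.range (ε+1),
      (X : Polynomial ℝ) ^ ((η-0)+(ε-q))
        * (X * C (sig1 m n ε η Pc a b 0 q) + C (sig0 m n ε η Pc a b 0 q))
      = (X ^ (ε+η+1) * C (Pc (ε+η+1) a b) + X ^ (η+ε) * C (Pc (η+ε) a b))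
        + ∑ j ∈ Finset.range ε, X ^ (η+j) * C (Pc (η+j) a b) := by
    rw [Finset.sum_range_succ']
    have t0 : (X : Polynomial ℝ) ^ ((η-0)+(ε-0))
        * (X * C (sig1 m n ε η Pc a b 0 0) + C (sig0 m n ε η Pc a b 0 0))
        = X ^ (ε+η+1) * C (Pc (ε+η+1) a b) + X ^ (η+ε) * C (Pc (η+ε) a b) := by
      have c1 : sig1 m n ε η Pc a b 0 0 = Pc (ε+η+1) a b := by
        simp only [sig1]
        rw [if_pos ⟨trivial, trivial⟩]
      have c2 : sig0 m n ε η Pc a b 0 0 = Pc (ε+η) a b := by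
        simp only [sig0]
        rw [if_pos ⟨trivial, trivial⟩]
      rw [c1, c2]
      have e1 : ε+η+1 = η+ε+1 := by omega
      have e2 : ε+η = η+ε := by omega
      rw [e1, e2]
      have e3 : (η-0)+(ε-0) = η+ε := by omega
      rw [e3]
      ring
    have ttail : ∀ i ∈ Finset.range ε, (X : Polynomial ℝ) ^ ((η-0)+(ε-(i+1)))
        * (X * C (sig1 m n ε η Pc a b 0 (i+1)) + C (sig0 m n ε η Pc a b 0 (i+1)))
        = X ^ (η+(ε-1-i)) * C (Pc (η+(ε-1-i)) a b) := by
      intro i hi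
      simp only [Finset.mem_range] at hi
      have c1 : sig1 m n ε η Pc a b 0 (i+1) = 0 := by
        simp only [sig1]
        rw [if_neg (fun hh => by omega)]
      have c2 : sig0 m n ε η Pc a b 0 (i+1) = Pc (η+(ε-1-i)) a b := by
        simp only [sig0]
        rw [if_neg (fun hh => by omega), if_pos ⟨trivial, by omega⟩]
        congr 1
        omega
      rw [c1, c2]
      have e3 : (η-0)+(ε-(i+1)) = η+(ε-1-i) := by omega
      rw [e3]
      simp
    rw [Finset.sum_congr rfl ttail, t0]
    rw [← Finset.sum_range_reflect (fun j => (X : Polynomial ℝ) ^ (η+j) * C (Pc (η+j) a b)) ε]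
    ring
  have hptail : ∀ i ∈ Finset.range η, ∑ q ∈ Finset.range (ε+1),
      (X : Polynomial ℝ) ^ ((η-(i+1))+(ε-q))
        * (X * C (sig1 m n ε η Pc a b (i+1) q) + C (sig0 m n ε η Pc a b (i+1) q))
      = X ^ (η-1-i) * C (Pc (η-1-i) a b) := by
    intro i hi
    simp only [Finset.mem_range] at hi
    rw [Finset.sum_eq_single_of_mem ε (Finset.mem_range.2 (by omega))]
    · have c1 : sig1 m n ε η Pc a b (i+1) ε = 0 := by
        simp only [sig1]
        rw [if_neg (fun hh => by omega)]
      have c2 : sig0 m n ε η Pc a b (i+1) ε = Pc (η-1-i) a b := by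
        simp only [sig0]
        rw [if_neg (fun hh => by omega), if_neg (fun hh => by omega), if_pos ⟨trivial, by omega⟩]
        congr 1
        omega
      rw [c1, c2]
      have e3 : (η-(i+1))+(ε-ε) = η-1-i := by omega
      rw [e3]
      simp
    · intro q hq hne
      have hq' : q < ε + 1 := Finset.mem_range.1 hq
      have c1 : sig1 m n ε η Pc a b (i+1) q = 0 := by
        simp only [sig1]
        rw [if_neg (fun hh => by omega)]
      have c2 : sig0 m n ε η Pc a b (i+1) q = 0 := by
        simp only [sig0]
        rw [if_neg (fun hh => by omega), if_neg (fun hh => by omega), if_neg (fun hh => by omega)]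
      rw [c1, c2]
      simp
  rw [Finset.sum_congr rfl hptail, hp0]
  -- now RHS
  rw [Finset.sum_range_succ]
  have hsplit : ∑ t ∈ Finset.range (ε+η+1), (X : Polynomial ℝ) ^ t * C (Pc t a b)
      = (∑ t ∈ Finset.range η, X ^ t * C (Pc t a b))
        + ∑ j ∈ Finset.range (ε+1), X ^ (η+j) * C (Pc (η+j) a b) := by
    have h1 : ∑ t ∈ Finset.range (ε+η+1), (X : Polynomial ℝ) ^ t * C (Pc t a b)
        = ∑ t ∈ Finset.Ico 0 (ε+η+1), X ^ t * C (Pc t a b) := by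
      rw [Finset.range_eq_Ico]
    rw [h1, ← Finset.sum_Ico_consecutive _ (Nat.zero_le η) (by omega : η ≤ ε+η+1),
      ← Finset.range_eq_Ico, Finset.sum_Ico_eq_sum_range]
    congr 1
    apply Finset.sum_congr (by congr 1; omega)
    intro j _
    rfl
  rw [hsplit]
  rw [← Finset.sum_range_reflect (fun t => (X : Polynomial ℝ) ^ t * C (Pc t a b)) η]
  rw [Finset.sum_range_succ (fun j => (X : Polynomial ℝ) ^ (η+j) * C (Pc (η+j) a b)) ε]
  have e4 : ε+η+1 = η+ε+1 := by omega
  have e5 : η+ε = ε+η := by omega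
  rw [e4]
  ring_nf

lemma Lam_SigmaP_Lam :
    (((Lam η)ᵀ ⊗ₖ (1 : Matrix (Fin m) (Fin m) (Polynomial ℝ))) * SigmaP m n ε η Pc)
        * (Lam ε ⊗ₖ (1 : Matrix (Fin n) (Fin n) (Polynomial ℝ)))
      = Matrix.of (fun (p : Fin 1 × Fin m) (q : Fin 1 × Fin n) => polyOf m n (ε+η+1) Pc p.2 q.2) := by
  ext ⟨i, a⟩ ⟨j, b⟩
  rw [mul_Lam_apply, Matrix.of_apply]
  have e2 : ∀ q : Fin (ε+1),
      (((Lam η)ᵀ ⊗ₖ (1 : Matrix (Fin m) (Fin m) (Polynomial ℝ))) * SigmaP m n ε η Pc) (i, a) (q, b)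
          * X ^ (ε - (q : ℕ))
        = ∑ p : Fin (η+1), X ^ ((η-(p : ℕ))+(ε-(q : ℕ)))
            * (X * C (sig1 m n ε η Pc a b (p : ℕ) (q : ℕ)) + C (sig0 m n ε η Pc a b (p : ℕ) (q : ℕ))) := by
    intro q
    rw [Lam_mul_apply, Finset.sum_mul]
    apply Finset.sum_congr rfl
    intro p _
    rw [SigmaP_apply]
    rw [pow_add]
    ring
  rw [Finset.sum_congr rfl (fun q _ => e2 q), Finset.sum_comm]
  have e3 : ∀ p : Fin (η+1), ∑ q : Fin (ε+1),
      (X : Polynomial ℝ) ^ ((η-(p : ℕ))+(ε-(q : ℕ)))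
        * (X * C (sig1 m n ε η Pc a b (p : ℕ) (q : ℕ)) + C (sig0 m n ε η Pc a b (p : ℕ) (q : ℕ)))
      = ∑ q ∈ Finset.range (ε+1), (X : Polynomial ℝ) ^ ((η-(p : ℕ))+(ε-q))
          * (X * C (sig1 m n ε η Pc a b (p : ℕ) q) + C (sig0 m n ε η Pc a b (p : ℕ) q)) := by
    intro p
    exact Fin.sum_univ_eq_sum_range (fun q => (X : Polynomial ℝ) ^ ((η-(p : ℕ))+(ε-q))
      * (X * C (sig1 m n ε η Pc a b (p : ℕ) q) + C (sig0 m n ε η Pc a b (p : ℕ) q))) (ε+1)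
  rw [Finset.sum_congr rfl (fun p _ => e3 p)]
  rw [Fin.sum_univ_eq_sum_range (fun p => ∑ q ∈ Finset.range (ε+1),
    (X : Polynomial ℝ) ^ ((η-p)+(ε-q))
      * (X * C (sig1 m n ε η Pc a b p q) + C (sig0 m n ε η Pc a b p q))) (η+1)]
  rw [sig_sum m n ε η Pc a b]
  rfl

end Sigma

end BKA


namespace BKA

section Main

open Matrix
open scoped Kronecker

variable (m n ε η : ℕ) (Pc : ℕ → Matrix (Fin m) (Fin n) ℝ)

lemma backward (α : ℝ)
    (Lx Ly : Matrix ((Fin (η + 1) × Fin m) ⊕ (Fin ε × Fin n))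
      ((Fin (ε + 1) × Fin n) ⊕ (Fin η × Fin m)) ℝ)
    (B₁ : Matrix (Fin (η + 1) × Fin m) (Fin ε × Fin n) ℝ)
    (B₂ : Matrix (Fin η × Fin m) (Fin (ε + 1) × Fin n) ℝ)
    (C₁ : Matrix (Fin ε × Fin n) (Fin ε × Fin n) ℝ)
    (C₂ : Matrix (Fin η × Fin m) (Fin η × Fin m) ℝ)
    (hdec : pencilM Lx Ly = Matrix.fromBlocks
        (C α • SigmaP m n ε η Pc
          + B₁.map C * (Lk ε ⊗ₖ (1 : Matrix (Fin n) (Fin n) (Polynomial ℝ)))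
          + ((Lk η)ᵀ ⊗ₖ (1 : Matrix (Fin m) (Fin m) (Polynomial ℝ))) * B₂.map C)
        (((Lk η)ᵀ ⊗ₖ (1 : Matrix (Fin m) (Fin m) (Polynomial ℝ))) * C₂.map C)
        (C₁.map C * (Lk ε ⊗ₖ (1 : Matrix (Fin n) (Fin n) (Polynomial ℝ))))
        (0 : Matrix (Fin ε × Fin n) (Fin η × Fin m) (Polynomial ℝ))) :
    GRect m n ε η Pc Lx Ly α := by
  unfold GRect
  rw [hdec, Matrix.fromBlocks_multiply, Matrix.fromBlocks_multiply]
  have h12 : ((Lam η)ᵀ ⊗ₖ (1 : Matrix (Fin m) (Fin m) (Polynomial ℝ)))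
      * (((Lk η)ᵀ ⊗ₖ (1 : Matrix (Fin m) (Fin m) (Polynomial ℝ))) * C₂.map C) = 0 := by
    rw [← Matrix.mul_assoc, LamL_mul_KL, Matrix.zero_mul]
  have h21 : (C₁.map C * (Lk ε ⊗ₖ (1 : Matrix (Fin n) (Fin n) (Polynomial ℝ))))
      * (Lam ε ⊗ₖ (1 : Matrix (Fin n) (Fin n) (Polynomial ℝ))) = 0 := by
    rw [Matrix.mul_assoc, KR_mul_LamR, Matrix.mul_zero]
  have h11 : ((Lam η)ᵀ ⊗ₖ (1 : Matrix (Fin m) (Fin m) (Polynomial ℝ)))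
      * (C α • SigmaP m n ε η Pc
          + B₁.map C * (Lk ε ⊗ₖ (1 : Matrix (Fin n) (Fin n) (Polynomial ℝ)))
          + ((Lk η)ᵀ ⊗ₖ (1 : Matrix (Fin m) (Fin m) (Polynomial ℝ))) * B₂.map C)
      * (Lam ε ⊗ₖ (1 : Matrix (Fin n) (Fin n) (Polynomial ℝ)))
      = Matrix.of fun (p : Fin 1 × Fin m) (q : Fin 1 × Fin n) =>
          C α * polyOf m n (ε + η + 1) Pc p.2 q.2 := by
    rw [Matrix.mul_add, Matrix.mul_add, Matrix.add_mul, Matrix.add_mul]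
    rw [← Matrix.mul_assoc _ (((Lk η)ᵀ ⊗ₖ (1 : Matrix (Fin m) (Fin m) (Polynomial ℝ)))) (B₂.map C),
      LamL_mul_KL, Matrix.zero_mul, Matrix.zero_mul, add_zero]
    rw [← Matrix.mul_assoc _ (B₁.map C) _,
      Matrix.mul_assoc (((Lam η)ᵀ ⊗ₖ (1 : Matrix (Fin m) (Fin m) (Polynomial ℝ))) * B₁.map C)
        (Lk ε ⊗ₖ (1 : Matrix (Fin n) (Fin n) (Polynomial ℝ)))
        (Lam ε ⊗ₖ (1 : Matrix (Fin n) (Fin n) (Polynomial ℝ))),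
      KR_mul_LamR, Matrix.mul_zero, add_zero]
    rw [Matrix.mul_smul, Matrix.smul_mul, Lam_SigmaP_Lam]
    ext x y
    simp [smul_eq_mul]
  simp only [Matrix.zero_mul, Matrix.mul_zero, Matrix.one_mul, Matrix.mul_one,
    zero_add, add_zero]
  rw [h12, h21, h11]

end Main

section Forward

open Matrix
open scoped Kronecker

variable (m n ε η : ℕ) (Pc : ℕ → Matrix (Fin m) (Fin n) ℝ) (α : ℝ)
variable (Lx Ly : Matrix ((Fin (η + 1) × Fin m) ⊕ (Fin ε × Fin n))
    ((Fin (ε + 1) × Fin n) ⊕ (Fin η × Fin m)) ℝ)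

/-- the λ-coefficient functions for the (1,1) block after subtracting `α Σ` -/
def Zone (a : Fin m) (b : Fin n) : ℕ → ℕ → ℝ := fun p q =>
  if h : p < η+1 ∧ q < ε+1 then
    Lx (Sum.inl (⟨p, h.1⟩, a)) (Sum.inl (⟨q, h.2⟩, b)) - α * sig1 m n ε η Pc a b p q
  else 0

/-- the constant-coefficient functions for the (1,1) block after subtracting `α Σ` -/
def Zzero (a : Fin m) (b : Fin n) : ℕ → ℕ → ℝ := fun p q =>
  if h : p < η+1 ∧ q < ε+1 then
    Ly (Sum.inl (⟨p, h.1⟩, a)) (Sum.inl (⟨q, h.2⟩, b)) - α * sig0 m n ε η Pc a b p q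
  else 0

/-- column functions for the (1,2) block -/
def W1 (MM : Matrix ((Fin (η + 1) × Fin m) ⊕ (Fin ε × Fin n))
    ((Fin (ε + 1) × Fin n) ⊕ (Fin η × Fin m)) ℝ)
    (a : Fin m) (y : (Fin (ε + 1) × Fin n) ⊕ (Fin η × Fin m)) : ℕ → ℕ → ℝ := fun p q =>
  if h : p < η+1 ∧ q = 0 then MM (Sum.inl (⟨p, h.1⟩, a)) y else 0

/-- row functions for the (2,1) block -/
def V1 (MM : Matrix ((Fin (η + 1) × Fin m) ⊕ (Fin ε × Fin n))
    ((Fin (ε + 1) × Fin n) ⊕ (Fin η × Fin m)) ℝ)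
    (x : (Fin (η + 1) × Fin m) ⊕ (Fin ε × Fin n)) (b : Fin n) : ℕ → ℕ → ℝ := fun p q =>
  if h : p = 0 ∧ q < ε+1 then MM x (Sum.inl (⟨q, h.2⟩, b)) else 0

lemma Zone_support (a b) : ∀ p q, η < p ∨ ε < q → Zone m n ε η Pc α Lx a b p q = 0 := by
  intro p q h
  simp only [Zone]
  rw [dif_neg (by omega)]

lemma Zzero_support (a b) : ∀ p q, η < p ∨ ε < q → Zzero m n ε η Pc α Ly a b p q = 0 := by
  intro p q h
  simp only [Zzero]
  rw [dif_neg (by omega)]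

lemma W1_support (MM) (a y) : ∀ p q, η < p ∨ 0 < q → W1 m n ε η MM a y p q = 0 := by
  intro p q h
  simp only [W1]
  rw [dif_neg (by omega)]

lemma V1_support (MM) (x b) : ∀ p q, 0 < p ∨ ε < q → V1 m n ε η MM x b p q = 0 := by
  intro p q h
  simp only [V1]
  rw [dif_neg (by omega)]

lemma Zone_val (a b) (p : Fin (η+1)) (q : Fin (ε+1)) :
    Zone m n ε η Pc α Lx a b (p : ℕ) (q : ℕ)
      = Lx (Sum.inl (p, a)) (Sum.inl (q, b)) - α * sig1 m n ε η Pc a b (p : ℕ) (q : ℕ) := by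
  simp only [Zone]
  rw [dif_pos ⟨p.2, q.2⟩]

lemma Zzero_val (a b) (p : Fin (η+1)) (q : Fin (ε+1)) :
    Zzero m n ε η Pc α Ly a b (p : ℕ) (q : ℕ)
      = Ly (Sum.inl (p, a)) (Sum.inl (q, b)) - α * sig0 m n ε η Pc a b (p : ℕ) (q : ℕ) := by
  simp only [Zzero]
  rw [dif_pos ⟨p.2, q.2⟩]

lemma W1_val (MM) (a y) (p : Fin (η+1)) :
    W1 m n ε η MM a y (p : ℕ) 0 = MM (Sum.inl (p, a)) y := by
  simp only [W1]
  rw [dif_pos ⟨p.2, trivial⟩]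

lemma V1_val (MM) (x b) (q : Fin (ε+1)) :
    V1 m n ε η MM x b 0 (q : ℕ) = MM x (Sum.inl (q, b)) := by
  simp only [V1]
  rw [dif_pos ⟨trivial, q.2⟩]

lemma sandwich_entry (D : Matrix (Fin (η+1) × Fin m) (Fin (ε+1) × Fin n) (Polynomial ℝ))
    (i : Fin 1) (a : Fin m) (j : Fin 1) (b : Fin n) :
    ((((Lam η)ᵀ ⊗ₖ (1 : Matrix (Fin m) (Fin m) (Polynomial ℝ))) * D)
        * (Lam ε ⊗ₖ (1 : Matrix (Fin n) (Fin n) (Polynomial ℝ)))) (i, a) (j, b)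
      = ∑ p : Fin (η+1), ∑ q : Fin (ε+1), X ^ ((η-(p : ℕ))+(ε-(q : ℕ))) * D (p, a) (q, b) := by
  rw [mul_Lam_apply]
  have e2 : ∀ q : Fin (ε+1),
      ((((Lam η)ᵀ ⊗ₖ (1 : Matrix (Fin m) (Fin m) (Polynomial ℝ))) * D)) (i, a) (q, b)
          * X ^ (ε - (q : ℕ))
        = ∑ p : Fin (η+1), X ^ ((η-(p : ℕ))+(ε-(q : ℕ))) * D (p, a) (q, b) := by
    intro q
    rw [Lam_mul_apply, Finset.sum_mul]
    apply Finset.sum_congr rfl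
    intro p _
    rw [pow_add]
    ring
  rw [Finset.sum_congr rfl (fun q _ => e2 q), Finset.sum_comm]

lemma pencil_blocks : pencilM Lx Ly = Matrix.fromBlocks
    (pencilM (Lx.toBlocks₁₁) (Ly.toBlocks₁₁)) (pencilM (Lx.toBlocks₁₂) (Ly.toBlocks₁₂))
    (pencilM (Lx.toBlocks₂₁) (Ly.toBlocks₂₁)) (pencilM (Lx.toBlocks₂₂) (Ly.toBlocks₂₂)) := by
  ext x y
  cases x <;> cases y <;> rfl

end Forward

end BKA

theorem stmt3 (m n ε η : ℕ) (Pc : ℕ → Matrix (Fin m) (Fin n) ℝ)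
    (hdeg : Pc (ε + η + 1) ≠ 0)
    (Lx Ly : Matrix ((Fin (η + 1) × Fin m) ⊕ (Fin ε × Fin n))
      ((Fin (ε + 1) × Fin n) ⊕ (Fin η × Fin m)) ℝ) :
    (∃ α : ℝ, GRect m n ε η Pc Lx Ly α) ↔
    ∃ (α : ℝ) (B₁ : Matrix (Fin (η + 1) × Fin m) (Fin ε × Fin n) ℝ)
      (B₂ : Matrix (Fin η × Fin m) (Fin (ε + 1) × Fin n) ℝ)
      (C₁ : Matrix (Fin ε × Fin n) (Fin ε × Fin n) ℝ)
      (C₂ : Matrix (Fin η × Fin m) (Fin η × Fin m) ℝ),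
      pencilM Lx Ly = Matrix.fromBlocks
        (C α • SigmaP m n ε η Pc
          + B₁.map C * (Lk ε ⊗ₖ (1 : Matrix (Fin n) (Fin n) (Polynomial ℝ)))
          + ((Lk η)ᵀ ⊗ₖ (1 : Matrix (Fin m) (Fin m) (Polynomial ℝ))) * B₂.map C)
        (((Lk η)ᵀ ⊗ₖ (1 : Matrix (Fin m) (Fin m) (Polynomial ℝ))) * C₂.map C)
        (C₁.map C * (Lk ε ⊗ₖ (1 : Matrix (Fin n) (Fin n) (Polynomial ℝ))))
        (0 : Matrix (Fin ε × Fin n) (Fin η × Fin m) (Polynomial ℝ)) := by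
  constructor
  · rintro ⟨α, hGR⟩
    unfold GRect at hGR
    rw [BKA.pencil_blocks m n ε η Lx Ly, Matrix.fromBlocks_multiply,
      Matrix.fromBlocks_multiply] at hGR
    simp only [Matrix.zero_mul, Matrix.mul_zero, Matrix.one_mul, Matrix.mul_one,
      zero_add, add_zero] at hGR
    have e11 := congrArg Matrix.toBlocks₁₁ hGR
    have e12 := congrArg Matrix.toBlocks₁₂ hGR
    have e21 := congrArg Matrix.toBlocks₂₁ hGR
    have e22 := congrArg Matrix.toBlocks₂₂ hGR
    rw [Matrix.toBlocks_fromBlocks₁₁, Matrix.toBlocks_fromBlocks₁₁] at e11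
    rw [Matrix.toBlocks_fromBlocks₁₂, Matrix.toBlocks_fromBlocks₁₂] at e12
    rw [Matrix.toBlocks_fromBlocks₂₁, Matrix.toBlocks_fromBlocks₂₁] at e21
    rw [Matrix.toBlocks_fromBlocks₂₂, Matrix.toBlocks_fromBlocks₂₂] at e22
    -- the homogeneous (1,1) pencil
    have hD : (((Lam η)ᵀ ⊗ₖ (1 : Matrix (Fin m) (Fin m) (Polynomial ℝ)))
        * (pencilM Lx.toBlocks₁₁ Ly.toBlocks₁₁ - C α • SigmaP m n ε η Pc))
        * (Lam ε ⊗ₖ (1 : Matrix (Fin n) (Fin n) (Polynomial ℝ))) = 0 := by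
      rw [Matrix.mul_sub, Matrix.sub_mul, e11, Matrix.mul_smul, Matrix.smul_mul,
        BKA.Lam_SigmaP_Lam m n ε η Pc]
      ext ⟨i, a⟩ ⟨j, b⟩
      simp [smul_eq_mul]
    -- star hypotheses for the (1,1) block
    have hstar11 : ∀ (a : Fin m) (b : Fin n) (u : ℕ),
        ∑ p ∈ Finset.range (η+1), ∑ q ∈ Finset.range (ε+1),
          ((if u = (η-p)+(ε-q)+1 then BKA.Zone m n ε η Pc α Lx a b p q else 0)
            + (if u = (η-p)+(ε-q) then BKA.Zzero m n ε η Pc α Ly a b p q else 0)) = 0 := by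
      intro a b
      apply BKA.star_of_poly η ε
      have h0 := congrArg (fun M' => M' ((0 : Fin 1), a) ((0 : Fin 1), b)) hD
      simp only [Matrix.zero_apply] at h0
      rw [BKA.sandwich_entry m n ε η] at h0
      have conv : ∀ (p : Fin (η+1)) (q : Fin (ε+1)),
          (X : Polynomial ℝ) ^ ((η-(p : ℕ))+(ε-(q : ℕ)))
            * (pencilM Lx.toBlocks₁₁ Ly.toBlocks₁₁ - C α • SigmaP m n ε η Pc) (p, a) (q, b)
          = X ^ ((η-(p : ℕ))+(ε-(q : ℕ)))
            * (X * C (BKA.Zone m n ε η Pc α Lx a b (p : ℕ) (q : ℕ))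
              + C (BKA.Zzero m n ε η Pc α Ly a b (p : ℕ) (q : ℕ))) := by
        intro p q
        rw [Matrix.sub_apply, Matrix.smul_apply, BKA.SigmaP_apply m n ε η Pc a b,
          BKA.Zone_val m n ε η Pc α Lx a b, BKA.Zzero_val m n ε η Pc α Ly a b]
        simp only [pencilM, Matrix.of_apply, Matrix.toBlocks₁₁, smul_eq_mul, _root_.map_sub, Polynomial.C_mul]
        ring
      rw [Finset.sum_congr rfl (fun p _ => Finset.sum_congr rfl (fun q _ => conv p q))] at h0
      have fin2 : ∀ p : Fin (η+1), ∑ q : Fin (ε+1),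
          (X : Polynomial ℝ) ^ ((η-(p : ℕ))+(ε-q))
            * (X * C (BKA.Zone m n ε η Pc α Lx a b (p : ℕ) q)
              + C (BKA.Zzero m n ε η Pc α Ly a b (p : ℕ) q))
          = ∑ q ∈ Finset.range (ε+1), (X : Polynomial ℝ) ^ ((η-(p : ℕ))+(ε-q))
            * (X * C (BKA.Zone m n ε η Pc α Lx a b (p : ℕ) q)
              + C (BKA.Zzero m n ε η Pc α Ly a b (p : ℕ) q)) :=
        fun p => Fin.sum_univ_eq_sum_range (fun q => (X : Polynomial ℝ) ^ ((η-(p : ℕ))+(ε-q))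
            * (X * C (BKA.Zone m n ε η Pc α Lx a b (p : ℕ) q)
              + C (BKA.Zzero m n ε η Pc α Ly a b (p : ℕ) q))) (ε+1)
      rw [Finset.sum_congr rfl (fun p _ => fin2 p),
        Fin.sum_univ_eq_sum_range (fun p => ∑ q ∈ Finset.range (ε+1),
          (X : Polynomial ℝ) ^ ((η-p)+(ε-q))
            * (X * C (BKA.Zone m n ε η Pc α Lx a b p q)
              + C (BKA.Zzero m n ε η Pc α Ly a b p q))) (η+1)] at h0
      exact h0
    -- star hypotheses for the (1,2) block
    have hstar12 : ∀ (a : Fin m) (y : Fin η × Fin m) (u : ℕ),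
        ∑ p ∈ Finset.range (η+1), ∑ q ∈ Finset.range (0+1),
          ((if u = (η-p)+(0-q)+1 then BKA.W1 m n ε η Lx a (Sum.inr y) p q else 0)
            + (if u = (η-p)+(0-q) then BKA.W1 m n ε η Ly a (Sum.inr y) p q else 0)) = 0 := by
      intro a y
      apply BKA.star_of_poly η 0
      have h0 := congrArg (fun M' => M' ((0 : Fin 1), a) y) e12
      simp only [Matrix.zero_apply] at h0
      rw [BKA.Lam_mul_apply] at h0
      have conv : ∀ p : Fin (η+1),
          (X : Polynomial ℝ) ^ (η-(p : ℕ)) * pencilM Lx.toBlocks₁₂ Ly.toBlocks₁₂ (p, a) y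
          = ∑ q ∈ Finset.range (0+1), (X : Polynomial ℝ) ^ ((η-(p : ℕ))+(0-q))
            * (X * C (BKA.W1 m n ε η Lx a (Sum.inr y) (p : ℕ) q)
              + C (BKA.W1 m n ε η Ly a (Sum.inr y) (p : ℕ) q)) := by
        intro p
        rw [Finset.sum_range_one, BKA.W1_val m n ε η Lx a (Sum.inr y) p,
          BKA.W1_val m n ε η Ly a (Sum.inr y) p]
        simp only [pencilM, Matrix.of_apply, Matrix.toBlocks₁₂, Nat.sub_zero, add_zero]
      rw [Finset.sum_congr rfl (fun p _ => conv p),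
        Fin.sum_univ_eq_sum_range (fun p => ∑ q ∈ Finset.range (0+1),
          (X : Polynomial ℝ) ^ ((η-p)+(0-q))
            * (X * C (BKA.W1 m n ε η Lx a (Sum.inr y) p q)
              + C (BKA.W1 m n ε η Ly a (Sum.inr y) p q))) (η+1)] at h0
      exact h0
    -- star hypotheses for the (2,1) block
    have hstar21 : ∀ (x : Fin ε × Fin n) (b : Fin n) (u : ℕ),
        ∑ p ∈ Finset.range (0+1), ∑ q ∈ Finset.range (ε+1),
          ((if u = (0-p)+(ε-q)+1 then BKA.V1 m n ε η Lx (Sum.inr x) b p q else 0)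
            + (if u = (0-p)+(ε-q) then BKA.V1 m n ε η Ly (Sum.inr x) b p q else 0)) = 0 := by
      intro x b
      apply BKA.star_of_poly 0 ε
      have h0 := congrArg (fun M' => M' x ((0 : Fin 1), b)) e21
      simp only [Matrix.zero_apply] at h0
      rw [BKA.mul_Lam_apply] at h0
      have conv : ∀ q : Fin (ε+1),
          pencilM Lx.toBlocks₂₁ Ly.toBlocks₂₁ x (q, b) * (X : Polynomial ℝ) ^ (ε-(q : ℕ))
          = (X : Polynomial ℝ) ^ ((0-(0:ℕ))+(ε-(q : ℕ)))
            * (X * C (BKA.V1 m n ε η Lx (Sum.inr x) b 0 (q : ℕ))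
              + C (BKA.V1 m n ε η Ly (Sum.inr x) b 0 (q : ℕ))) := by
        intro q
        rw [BKA.V1_val m n ε η Lx (Sum.inr x) b q, BKA.V1_val m n ε η Ly (Sum.inr x) b q]
        simp only [pencilM, Matrix.of_apply, Matrix.toBlocks₂₁, Nat.sub_zero, zero_add]
        ring
      rw [Finset.sum_congr rfl (fun q _ => conv q)] at h0
      rw [Finset.sum_range_one]
      rw [Fin.sum_univ_eq_sum_range (fun q => (X : Polynomial ℝ) ^ ((0-(0:ℕ))+(ε-q))
          * (X * C (BKA.V1 m n ε η Lx (Sum.inr x) b 0 q)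
            + C (BKA.V1 m n ε η Ly (Sum.inr x) b 0 q))) (ε+1)] at h0
      exact h0
    -- the ansatz matrices
    refine ⟨α,
      Matrix.of (fun pa rb => BKA.b1 (BKA.Zone m n ε η Pc α Lx pa.2 rb.2)
        (BKA.Zzero m n ε η Pc α Ly pa.2 rb.2) (pa.1 : ℕ) (rb.1 : ℕ)),
      Matrix.of (fun sa qb => BKA.b2 (BKA.Zone m n ε η Pc α Lx sa.2 qb.2)
        (BKA.Zzero m n ε η Pc α Ly sa.2 qb.2) (sa.1 : ℕ) (qb.1 : ℕ)),
      Matrix.of (fun x rb => BKA.b1 (BKA.V1 m n ε η Lx (Sum.inr x) rb.2)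
        (BKA.V1 m n ε η Ly (Sum.inr x) rb.2) 0 (rb.1 : ℕ)),
      Matrix.of (fun sa y => BKA.b2 (BKA.W1 m n ε η Lx sa.2 (Sum.inr y))
        (BKA.W1 m n ε η Ly sa.2 (Sum.inr y)) (sa.1 : ℕ) 0), ?_⟩
    refine Matrix.ext fun x y => ?_
    rcases x with ⟨p, a⟩ | ⟨r, c⟩ <;> rcases y with ⟨q, b⟩ | ⟨s, c'⟩
    · -- (1,1) block
      rw [Matrix.fromBlocks_apply₁₁, Matrix.add_apply, Matrix.add_apply, Matrix.smul_apply,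
        BKA.SigmaP_apply m n ε η Pc a b,
        BKA.mul_Lk_apply ε n _ (fun pa b' r => C (BKA.b1 (BKA.Zone m n ε η Pc α Lx pa.2 b')
          (BKA.Zzero m n ε η Pc α Ly pa.2 b') (pa.1 : ℕ) r)) (fun x r b' => rfl),
        BKA.Lk_mul_apply η m _ (fun a' s' y' => C (BKA.b2 (BKA.Zone m n ε η Pc α Lx a' y'.2)
          (BKA.Zzero m n ε η Pc α Ly a' y'.2) s' (y'.1 : ℕ))) (fun s' a' y' => rfl)]
      have hr := BKA.recon η ε (BKA.Zone m n ε η Pc α Lx a b) (BKA.Zzero m n ε η Pc α Ly a b)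
        (BKA.Zone_support m n ε η Pc α Lx a b) (BKA.Zzero_support m n ε η Pc α Ly a b)
        (hstar11 a b) (p : ℕ) (q : ℕ) (by omega) (by omega)
      rw [BKA.Zone_val m n ε η Pc α Lx a b, BKA.Zzero_val m n ε η Pc α Ly a b] at hr
      simp only [_root_.map_sub, Polynomial.C_mul] at hr
      simp only [pencilM, Matrix.of_apply, smul_eq_mul]
      linear_combination hr
    · -- (1,2) block
      rw [Matrix.fromBlocks_apply₁₂,
        BKA.Lk_mul_apply η m _ (fun a' s' y' => C (BKA.b2 (BKA.W1 m n ε η Lx a' (Sum.inr y'))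
          (BKA.W1 m n ε η Ly a' (Sum.inr y')) s' 0)) (fun s' a' y' => rfl)]
      have hr := BKA.recon η 0 (BKA.W1 m n ε η Lx a (Sum.inr (s, c'))) (BKA.W1 m n ε η Ly a (Sum.inr (s, c')))
        (BKA.W1_support m n ε η Lx a (Sum.inr (s, c'))) (BKA.W1_support m n ε η Ly a (Sum.inr (s, c')))
        (hstar12 a (s, c')) (p : ℕ) 0 (by omega) (by omega)
      rw [BKA.W1_val m n ε η Lx a (Sum.inr (s, c')) p,
        BKA.W1_val m n ε η Ly a (Sum.inr (s, c')) p] at hr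
      rw [if_neg (lt_irrefl 0), if_neg (by omega : ¬ (1:ℕ) ≤ 0)] at hr
      simp only [zero_add] at hr
      rw [← hr]
      simp only [pencilM, Matrix.of_apply]
    · -- (2,1) block
      rw [Matrix.fromBlocks_apply₂₁,
        BKA.mul_Lk_apply ε n _ (fun x' b' r => C (BKA.b1 (BKA.V1 m n ε η Lx (Sum.inr x') b')
          (BKA.V1 m n ε η Ly (Sum.inr x') b') 0 r)) (fun x' r b' => rfl)]
      have hr := BKA.recon 0 ε (BKA.V1 m n ε η Lx (Sum.inr (r, c)) b) (BKA.V1 m n ε η Ly (Sum.inr (r, c)) b)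
        (BKA.V1_support m n ε η Lx (Sum.inr (r, c)) b) (BKA.V1_support m n ε η Ly (Sum.inr (r, c)) b)
        (hstar21 (r, c) b) 0 (q : ℕ) (by omega) (by omega)
      rw [BKA.V1_val m n ε η Lx (Sum.inr (r, c)) b q,
        BKA.V1_val m n ε η Ly (Sum.inr (r, c)) b q] at hr
      rw [if_neg (lt_irrefl 0), if_neg (by omega : ¬ (1:ℕ) ≤ 0)] at hr
      simp only [zero_add, add_zero] at hr
      rw [← hr]
      simp only [pencilM, Matrix.of_apply]
    · -- (2,2) block
      rw [Matrix.fromBlocks_apply₂₂, Matrix.zero_apply]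
      have h0 := congrArg (fun M' => M' (r, c) (s, c')) e22
      simp only [Matrix.zero_apply] at h0
      exact h0
  · rintro ⟨α, B₁, B₂, C₁, C₂, hdec⟩
    exact ⟨α, BKA.backward m n ε η Pc α Lx Ly B₁ B₂ C₁ C₂ hdec⟩
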